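/- If f is convex decomposable (equivalently, Γ is walk-summable), then the series Σ_{t=0}^∞ Rᵗ converges absolutely and Γ⁻¹ = Σ_{t=0}^∞ Rᵗ, where R = I − Γ. -/

import Mathlib

open Matrix Filter
open scoped ENNReal NNReal Topology

lemma aux_pow_entry_nonneg {n : ℕ} {A : Matrix (Fin n) (Fin n) ℝ} (hA : ∀ i j, 0 ≤ A i j) :
    ∀ t i j, 0 ≤ (A ^ t) i j := by
  intro t
  induction t with
  | zero => intro i j; by_cases h : i = j <;> simp [h, Matrix.one_apply]
  | succ t ih =>
    intro i j
    rw [pow_succ, Matrix.mul_apply]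
    exact Finset.sum_nonneg fun k _ => mul_nonneg (ih i k) (hA k j)

lemma aux_abs_pow_entry_le {n : ℕ} (A : Matrix (Fin n) (Fin n) ℝ) :
    ∀ t i j, |(A ^ t) i j| ≤ ((A.map (fun a => |a|)) ^ t) i j := by
  intro t
  induction t with
  | zero => intro i j; by_cases h : i = j <;> simp [h, Matrix.one_apply]
  | succ t ih =>
    intro i j
    rw [pow_succ, pow_succ, Matrix.mul_apply, Matrix.mul_apply]
    refine (Finset.abs_sum_le_sum_abs _ _).trans (Finset.sum_le_sum fun k _ => ?_)
    rw [abs_mul]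
    exact mul_le_mul (ih i k) (le_of_eq rfl) (abs_nonneg _)
      (aux_pow_entry_nonneg (fun i j => abs_nonneg _) t i k)

attribute [local instance] Matrix.linftyOpNormedRing Matrix.linftyOpNormedAlgebra in
lemma aux_entry_le_norm {n : ℕ} (A : Matrix (Fin n) (Fin n) ℂ) (i j : Fin n) :
    ‖A i j‖ ≤ ‖A‖ := by
  have : ‖A i j‖₊ ≤ ‖A‖₊ := by
    rw [Matrix.linfty_opNNNorm_def]
    calc ‖A i j‖₊ ≤ ∑ k, ‖A i k‖₊ :=
          Finset.single_le_sum (f := fun k => ‖A i k‖₊) (fun k _ => zero_le)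
            (Finset.mem_univ j)
      _ ≤ _ := Finset.le_sup (f := fun i => ∑ k, ‖A i k‖₊) (Finset.mem_univ i)
  exact_mod_cast this

attribute [local instance] Matrix.linftyOpNormedRing Matrix.linftyOpNormedAlgebra in
lemma aux_key {n : ℕ} (M : Matrix (Fin n) (Fin n) ℝ)
    (hws : spectralRadius ℂ (M.map Complex.ofReal) < 1) :
    ∃ r : ℝ, 0 ≤ r ∧ r < 1 ∧
      ∀ᶠ k : ℕ in atTop, ∀ i j, ‖((M.map Complex.ofReal) ^ k) i j‖ ≤ r ^ k := by
  set B := M.map Complex.ofReal with hB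
  obtain ⟨r, hr1, hr2⟩ := exists_between hws
  have hrtop : r ≠ ⊤ := (hr2.trans_le le_top).ne
  have gel := spectrum.pow_nnnorm_pow_one_div_tendsto_nhds_spectralRadius B
  have hev : ∀ᶠ k : ℕ in atTop, ((‖B ^ k‖₊ : ℝ≥0∞)) ^ (1 / (k : ℝ)) < r :=
    gel.eventually_lt_const hr1
  refine ⟨r.toReal, ENNReal.toReal_nonneg, ?_, ?_⟩
  · have := (ENNReal.toReal_lt_toReal hrtop ENNReal.one_ne_top).mpr hr2
    simpa using this
  · filter_upwards [hev, eventually_ge_atTop 1] with k hk hk1 i j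
    have hknz : (k : ℝ) ≠ 0 := by positivity
    have h1 : (‖B ^ k‖₊ : ℝ≥0∞) ≤ r ^ k := by
      have h2 := ENNReal.rpow_le_rpow hk.le (by positivity : (0:ℝ) ≤ (k : ℝ))
      rwa [← ENNReal.rpow_mul, one_div, inv_mul_cancel₀ hknz, ENNReal.rpow_one,
        ENNReal.rpow_natCast] at h2
    have h3 : ‖B ^ k‖ ≤ r.toReal ^ k := by
      have := ENNReal.toReal_mono (by simp [hrtop, ENNReal.pow_ne_top]) h1
      simpa [ENNReal.toReal_pow] using this
    exact (aux_entry_le_norm _ i j).trans h3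

/-- If `Γ` is walk-summable (spectral radius of `|R| = |I − Γ|` less than 1), then
`Σ_{t} Rᵗ` converges absolutely and `Γ⁻¹ = Σ_{t=0}^∞ Rᵗ`. -/
theorem stmt10 {n : ℕ} (Γ : Matrix (Fin n) (Fin n) ℝ) (hsym : Γ.IsSymm)
    (hdiag : ∀ i, Γ i i = 1) (hpd : Γ.PosDef)
    (hws : spectralRadius ℂ (((1 - Γ).map (fun a => |a|)).map (Complex.ofReal)) < 1) :
    (∀ i j, Summable (fun t : ℕ => |((1 - Γ) ^ t) i j|)) ∧
    Summable (fun t : ℕ => (1 - Γ) ^ t) ∧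
    Γ⁻¹ = ∑' t : ℕ, (1 - Γ) ^ t := by
  set M := (1 - Γ).map (fun a => |a|) with hMdef
  obtain ⟨r, hr0, hr1, hev⟩ := aux_key M hws
  have hMpow : ∀ k : ℕ, (M.map Complex.ofReal) ^ k = (M ^ k).map Complex.ofReal := by
    intro k
    exact (map_pow (Complex.ofRealHom.mapMatrix) M k).symm
  have hMnn : ∀ k i j, 0 ≤ (M ^ k) i j :=
    aux_pow_entry_nonneg (fun i j => abs_nonneg _)
  have hevM : ∀ᶠ k : ℕ in atTop, ∀ i j, (M ^ k) i j ≤ r ^ k := by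
    filter_upwards [hev] with k hk i j
    have h := hk i j
    rw [hMpow k] at h
    rwa [show ((M ^ k).map Complex.ofReal) i j = ((M ^ k) i j : ℂ) from rfl,
      Complex.norm_real, Real.norm_eq_abs, abs_of_nonneg (hMnn k i j)] at h
  have hMsum : ∀ i j, Summable (fun k : ℕ => (M ^ k) i j) := by
    intro i j
    refine summable_of_isBigO_nat (summable_geometric_of_lt_one hr0 hr1) ?_
    refine Asymptotics.IsBigO.of_bound 1 ?_
    filter_upwards [hevM] with k hk
    simpa [Real.norm_eq_abs, abs_of_nonneg (hMnn k i j),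
      abs_of_nonneg hr0, abs_of_nonneg (pow_nonneg hr0 k)] using hk i j
  have hsum1 : ∀ i j, Summable (fun t : ℕ => |((1 - Γ) ^ t) i j|) := by
    intro i j
    exact (hMsum i j).of_nonneg_of_le (fun t => abs_nonneg _)
      (fun t => aux_abs_pow_entry_le (1 - Γ) t i j)
  have hsum2 : Summable (fun t : ℕ => (1 - Γ) ^ t) :=
    Pi.summable.2 fun i => Pi.summable.2 fun j => (hsum1 i j).of_abs
  refine ⟨hsum1, hsum2, ?_⟩
  have hS := hsum2.hasSum
  have h1 : Tendsto (fun N => Γ * ∑ t ∈ Finset.range N, (1 - Γ) ^ t) atTop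
      (𝓝 (Γ * ∑' t : ℕ, (1 - Γ) ^ t)) := hS.tendsto_sum_nat.const_mul Γ
  have h2 : (fun N => Γ * ∑ t ∈ Finset.range N, (1 - Γ) ^ t)
      = fun N => 1 - (1 - Γ) ^ N := by
    funext N
    have := mul_neg_geom_sum (1 - Γ) N
    rwa [sub_sub_cancel] at this
  rw [h2] at h1
  have h3 : Tendsto (fun N => 1 - (1 - Γ) ^ N) atTop
      (𝓝 ((1 : Matrix (Fin n) (Fin n) ℝ) - 0)) :=
    tendsto_const_nhds.sub hsum2.tendsto_atTop_zero
  have hmul : Γ * ∑' t : ℕ, (1 - Γ) ^ t = 1 := by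
    have := tendsto_nhds_unique h1 h3
    simpa using this
  exact inv_eq_right_inv hmul
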